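/- Let 𝒫 be a set of permutations with 𝒫_n = 𝒫 ∩ S_n nonempty for infinitely many n. If each nonempty 𝒫_n is a union of conjugacy classes of S_n, and the average number of fixed points f_n of the elements of 𝒫_n satisfies f_n = o(n) as n → ∞ along n with 𝒫_n nonempty, then 𝒫 is quasirandom. -/

import Mathlib

open Filter

/-- The average number of fixed points of the members of a set `P` of permutations
of `[n]`. -/
noncomputable def avgFix {n : ℕ} (P : Finset (Equiv.Perm (Fin n))) : ℝ :=
  (∑ φ ∈ P, (Nat.card {t : Fin n // φ t = t} : ℝ)) / (P.card : ℝ)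

/-- `φ` contains the sequence `τ` (of `k` distinct elements of `[n]`) as a subsequence:
there are positions `i₁ < ⋯ < i_k` with `φ(i_j) = τ_j`. -/
def ContainsSeq {n k : ℕ} (φ : Equiv.Perm (Fin n)) (τ : Fin k → Fin n) : Prop :=
  ∃ g : Fin k → Fin n, StrictMono g ∧ ∀ j, φ (g j) = τ j

open Equiv Finset

theorem Equiv.Perm.apply_inv_self {α : Type*} (f : Perm α) (x : α) : f (f⁻¹ x) = x :=
  f.apply_symm_apply x

theorem Equiv.Perm.inv_apply_self {α : Type*} (f : Perm α) (x : α) : f⁻¹ (f x) = x :=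
  f.symm_apply_apply x

namespace QR


set_option linter.unusedVariables false

variable {n k : ℕ}

attribute [local instance] Classical.propDecidable



lemma card_subtype_ne' {n : ℕ} (x : Fin (n+1)) : Fintype.card {z : Fin (n+1) // z ≠ x} = n := by
  have : Fintype.card {z : Fin (n+1) // ¬ z = x} = Fintype.card (Fin (n+1)) - Fintype.card {z : Fin (n+1) // z = x} :=
    Fintype.card_subtype_compl _
  simpa using this

def fixEquiv {n : ℕ} (x : Fin n) :
    Perm {z : Fin n // z ≠ x} ≃ {ψ : Perm (Fin n) // ψ x = x} :=
  (Perm.subtypeEquivSubtypePerm _).trans (Equiv.subtypeEquivRight (fun f => by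
    constructor
    · intro h
      exact h x (by simp)
    · intro h a ha
      rw [not_not.mp ha]
      exact h))

lemma card_one_prescribed {n : ℕ} (x y : Fin (n+1)) :
    (univ.filter fun ψ : Perm (Fin (n+1)) => ψ x = y).card = n.factorial := by
  have e1 : {ψ : Perm (Fin (n+1)) // ψ x = x} ≃ {ψ : Perm (Fin (n+1)) // ψ x = y} :=
    { toFun := fun ψ => ⟨Equiv.swap x y * ψ.1, by
        simp [Perm.mul_apply, ψ.2, Equiv.swap_apply_left]⟩
      invFun := fun ψ => ⟨Equiv.swap x y * ψ.1, by
        simp [Perm.mul_apply, ψ.2, Equiv.swap_apply_right]⟩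
      left_inv := fun ψ => by
        ext1; simp [← mul_assoc, Equiv.swap_mul_self, one_mul]
      right_inv := fun ψ => by
        ext1; simp [← mul_assoc, Equiv.swap_mul_self, one_mul] }
  calc (univ.filter fun ψ : Perm (Fin (n+1)) => ψ x = y).card
      = Fintype.card {ψ : Perm (Fin (n+1)) // ψ x = y} := (Fintype.card_subtype _).symm
    _ = Fintype.card (Perm {z : Fin (n+1) // z ≠ x}) :=
        (Fintype.card_congr (((fixEquiv x).trans e1).symm))
    _ = n.factorial := by rw [Fintype.card_perm, card_subtype_ne' x]




lemma card_subtype_ne2 {n : ℕ} (x x' : Fin (n+2)) (h : x ≠ x') :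
    Fintype.card {z : Fin (n+2) // z ≠ x ∧ z ≠ x'} = n := by
  rw [Fintype.card_subtype]
  have hset : (univ.filter fun z : Fin (n+2) => z ≠ x ∧ z ≠ x') = univ \ {x, x'} := by
    ext z; simp [not_or, and_comm]
  rw [hset, card_sdiff_of_subset (by simp)]
  rw [card_insert_of_notMem (by simpa using h), card_singleton]
  simp

def fixEquiv2 {n : ℕ} (x x' : Fin n) :
    Perm {z : Fin n // z ≠ x ∧ z ≠ x'} ≃ {ψ : Perm (Fin n) // ψ x = x ∧ ψ x' = x'} :=
  (Perm.subtypeEquivSubtypePerm _).trans (Equiv.subtypeEquivRight (fun f => by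
    constructor
    · intro h
      exact ⟨h x (by simp), h x' (by simp)⟩
    · intro h a ha
      rcases not_and_or.mp ha with ha | ha
      · rw [not_not.mp ha]; exact h.1
      · rw [not_not.mp ha]; exact h.2))

lemma exists_perm_two {n : ℕ} (x x' y y' : Fin n) (hx : x ≠ x') (hy : y ≠ y') :
    ∃ ψ₀ : Perm (Fin n), ψ₀ x = y ∧ ψ₀ x' = y' := by
  refine ⟨Equiv.swap (Equiv.swap x y x') y' * Equiv.swap x y, ?_, ?_⟩
  · have h1 : Equiv.swap x y x' ≠ y := by
      intro hc
      apply hx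
      have : Equiv.swap x y x = y := Equiv.swap_apply_left x y
      exact ((Equiv.swap x y).injective (this.trans hc.symm))
    simp [Perm.mul_apply, Equiv.swap_apply_left, Equiv.swap_apply_of_ne_of_ne h1.symm hy]
  · simp [Perm.mul_apply, Equiv.swap_apply_left]

lemma card_two_prescribed {n : ℕ} (x x' y y' : Fin (n+2)) (hx : x ≠ x') (hy : y ≠ y') :
    (univ.filter fun ψ : Perm (Fin (n+2)) => ψ x = y ∧ ψ x' = y').card = n.factorial := by
  obtain ⟨ψ₀, h₀, h₀'⟩ := exists_perm_two x x' y y' hx hy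
  have e1 : {ψ : Perm (Fin (n+2)) // ψ x = x ∧ ψ x' = x'} ≃
      {ψ : Perm (Fin (n+2)) // ψ x = y ∧ ψ x' = y'} :=
    { toFun := fun ψ => ⟨ψ₀ * ψ.1, by simp [Perm.mul_apply, ψ.2.1, ψ.2.2, h₀, h₀']⟩
      invFun := fun ψ => ⟨ψ₀⁻¹ * ψ.1, by
        constructor
        · rw [Perm.mul_apply, ψ.2.1, ← h₀]; simp
        · rw [Perm.mul_apply, ψ.2.2, ← h₀']; simp⟩
      left_inv := fun ψ => by ext1; simp [← mul_assoc]
      right_inv := fun ψ => by ext1; simp [← mul_assoc] }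
  calc (univ.filter fun ψ : Perm (Fin (n+2)) => ψ x = y ∧ ψ x' = y').card
      = Fintype.card {ψ : Perm (Fin (n+2)) // ψ x = y ∧ ψ x' = y'} := (Fintype.card_subtype _).symm
    _ = Fintype.card (Perm {z : Fin (n+2) // z ≠ x ∧ z ≠ x'}) :=
        (Fintype.card_congr (((fixEquiv2 x x').trans e1).symm))
    _ = n.factorial := by rw [Fintype.card_perm, card_subtype_ne2 x x' hx]





lemma strictMono_sort {c : Fin k → Fin n} (hc : Function.Injective c) :
    StrictMono (c ∘ Tuple.sort c) :=
  (Tuple.monotone_sort c).strictMono_of_injective (hc.comp (Tuple.sort c).injective)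

lemma sort_eq_iff {c : Fin k → Fin n} (hc : Function.Injective c) (σ : Perm (Fin k)) :
    StrictMono (c ∘ σ) ↔ σ = Tuple.sort c :=
  ⟨fun h => Equiv.ext fun x =>
      hc (congrFun (Tuple.unique_monotone h.monotone (strictMono_sort hc).monotone) x),
   fun h => h ▸ strictMono_sort hc⟩

/-- `c φ ψ τ j = ψ (φ (ψ⁻¹ (τ j)))`. -/
def cfun (φ ψ : Perm (Fin n)) (τ : Fin k → Fin n) : Fin k → Fin n :=
  fun j => ψ (φ (ψ⁻¹ (τ j)))

lemma cfun_inj (φ ψ : Perm (Fin n)) {τ : Fin k → Fin n} (hτ : Function.Injective τ) :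
    Function.Injective (cfun φ ψ τ) := fun a b h =>
  hτ ((ψ⁻¹ : Perm (Fin n)).injective (φ.injective (ψ.injective h)))

/-- goodness: no collision between the `ψ⁻¹ τ i` and their `φ`-images. -/
def goodP (φ : Perm (Fin n)) (τ : Fin k → Fin n) (ψ : Perm (Fin n)) : Prop :=
  ∀ i j, φ (ψ⁻¹ (τ j)) ≠ ψ⁻¹ (τ i)

/-- fiber of the sorting map -/
def Fs (φ : Perm (Fin n)) (τ : Fin k → Fin n) (σ : Perm (Fin k)) : Finset (Perm (Fin n)) :=
  univ.filter fun ψ => Tuple.sort (cfun φ ψ τ) = σ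

lemma mem_Fs {φ : Perm (Fin n)} {τ : Fin k → Fin n} (hτ : Function.Injective τ)
    {σ : Perm (Fin k)} {ψ : Perm (Fin n)} :
    ψ ∈ Fs φ τ σ ↔ StrictMono (cfun φ ψ τ ∘ σ) := by
  rw [Fs, mem_filter, sort_eq_iff (cfun_inj φ ψ hτ) σ]
  simp [eq_comm]

/-- the embedding `j ↦ φ (ψ⁻¹ (τ j))`. -/
def bemb (φ ψ : Perm (Fin n)) {τ : Fin k → Fin n} (hτ : Function.Injective τ) :
    Fin k ↪ Fin n :=
  ⟨fun j => φ (ψ⁻¹ (τ j)), fun a b h =>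
    hτ ((ψ⁻¹ : Perm (Fin n)).injective (φ.injective h))⟩

/-- the permutation of `Fin n` permuting the `φ (ψ⁻¹ (τ j))` according to `σ`. -/
noncomputable def rho (φ ψ : Perm (Fin n)) {τ : Fin k → Fin n} (hτ : Function.Injective τ)
    (σ : Perm (Fin k)) : Perm (Fin n) :=
  σ.viaEmbedding (bemb φ ψ hτ)

lemma rho_apply_b (φ ψ : Perm (Fin n)) {τ : Fin k → Fin n} (hτ : Function.Injective τ)
    (σ : Perm (Fin k)) (j : Fin k) :
    rho φ ψ hτ σ (φ (ψ⁻¹ (τ j))) = φ (ψ⁻¹ (τ (σ j))) :=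
  σ.viaEmbedding_apply (bemb φ ψ hτ) j

lemma rho_fix {φ ψ : Perm (Fin n)} {τ : Fin k → Fin n} (hτ : Function.Injective τ)
    (σ : Perm (Fin k)) (hg : goodP φ τ ψ) (i : Fin k) :
    rho φ ψ hτ σ (ψ⁻¹ (τ i)) = ψ⁻¹ (τ i) := by
  apply σ.viaEmbedding_apply_of_notMem (bemb φ ψ hτ)
  rintro ⟨j, hj⟩
  exact hg i j hj

lemma rho_inv_fix {φ ψ : Perm (Fin n)} {τ : Fin k → Fin n} (hτ : Function.Injective τ)
    (σ : Perm (Fin k)) (hg : goodP φ τ ψ) (i : Fin k) :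
    (rho φ ψ hτ σ)⁻¹ (ψ⁻¹ (τ i)) = ψ⁻¹ (τ i) := by
  rw [Perm.inv_eq_iff_eq, rho_fix hτ σ hg i]

lemma mulrho_inv_apply {φ ψ : Perm (Fin n)} {τ : Fin k → Fin n} (hτ : Function.Injective τ)
    (σ : Perm (Fin k)) (hg : goodP φ τ ψ) (i : Fin k) :
    (ψ * rho φ ψ hτ σ)⁻¹ (τ i) = ψ⁻¹ (τ i) := by
  rw [mul_inv_rev, Perm.mul_apply, rho_inv_fix hτ σ hg i]

lemma good_mulrho {φ ψ : Perm (Fin n)} {τ : Fin k → Fin n} (hτ : Function.Injective τ)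
    (σ : Perm (Fin k)) (hg : goodP φ τ ψ) :
    goodP φ τ (ψ * rho φ ψ hτ σ) := by
  intro i j
  rw [mulrho_inv_apply hτ σ hg i, mulrho_inv_apply hτ σ hg j]
  exact hg i j

lemma bemb_mulrho {φ ψ : Perm (Fin n)} {τ : Fin k → Fin n} (hτ : Function.Injective τ)
    (σ : Perm (Fin k)) (hg : goodP φ τ ψ) :
    bemb φ (ψ * rho φ ψ hτ σ) hτ = bemb φ ψ hτ := by
  refine Function.Embedding.ext fun j => ?_
  show φ ((ψ * rho φ ψ hτ σ)⁻¹ (τ j)) = φ (ψ⁻¹ (τ j))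
  rw [mulrho_inv_apply hτ σ hg j]

lemma cfun_mulrho {φ ψ : Perm (Fin n)} {τ : Fin k → Fin n} (hτ : Function.Injective τ)
    (σ : Perm (Fin k)) (hg : goodP φ τ ψ) (j : Fin k) :
    cfun φ (ψ * rho φ ψ hτ σ) τ j = cfun φ ψ τ (σ j) := by
  unfold cfun
  rw [mulrho_inv_apply hτ σ hg j, Perm.mul_apply, rho_apply_b φ ψ hτ σ j]

-- analogous facts for multiplying by `(rho ... σ)⁻¹`
lemma mulrhoinv_inv_apply {φ ψ : Perm (Fin n)} {τ : Fin k → Fin n} (hτ : Function.Injective τ)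
    (σ : Perm (Fin k)) (hg : goodP φ τ ψ) (i : Fin k) :
    (ψ * (rho φ ψ hτ σ)⁻¹)⁻¹ (τ i) = ψ⁻¹ (τ i) := by
  rw [mul_inv_rev, inv_inv, Perm.mul_apply, rho_fix hτ σ hg i]

lemma good_mulrhoinv {φ ψ : Perm (Fin n)} {τ : Fin k → Fin n} (hτ : Function.Injective τ)
    (σ : Perm (Fin k)) (hg : goodP φ τ ψ) :
    goodP φ τ (ψ * (rho φ ψ hτ σ)⁻¹) := by
  intro i j
  rw [mulrhoinv_inv_apply hτ σ hg i, mulrhoinv_inv_apply hτ σ hg j]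
  exact hg i j

lemma bemb_mulrhoinv {φ ψ : Perm (Fin n)} {τ : Fin k → Fin n} (hτ : Function.Injective τ)
    (σ : Perm (Fin k)) (hg : goodP φ τ ψ) :
    bemb φ (ψ * (rho φ ψ hτ σ)⁻¹) hτ = bemb φ ψ hτ := by
  refine Function.Embedding.ext fun j => ?_
  show φ ((ψ * (rho φ ψ hτ σ)⁻¹)⁻¹ (τ j)) = φ (ψ⁻¹ (τ j))
  rw [mulrhoinv_inv_apply hτ σ hg j]

lemma rho_inv_apply_b (φ ψ : Perm (Fin n)) {τ : Fin k → Fin n} (hτ : Function.Injective τ)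
    (σ : Perm (Fin k)) (j : Fin k) :
    (rho φ ψ hτ σ)⁻¹ (φ (ψ⁻¹ (τ j))) = φ (ψ⁻¹ (τ (σ⁻¹ j))) := by
  rw [Perm.inv_eq_iff_eq, rho_apply_b φ ψ hτ σ (σ⁻¹ j), Perm.apply_inv_self]

lemma cfun_mulrhoinv {φ ψ : Perm (Fin n)} {τ : Fin k → Fin n} (hτ : Function.Injective τ)
    (σ : Perm (Fin k)) (hg : goodP φ τ ψ) (j : Fin k) :
    cfun φ (ψ * (rho φ ψ hτ σ)⁻¹) τ j = cfun φ ψ τ (σ⁻¹ j) := by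
  unfold cfun
  rw [mulrhoinv_inv_apply hτ σ hg j, Perm.mul_apply, rho_inv_apply_b φ ψ hτ σ j]

/-- The bijection: good fibers all have the same cardinality. -/
lemma card_good_fiber (φ : Perm (Fin n)) {τ : Fin k → Fin n} (hτ : Function.Injective τ)
    (σ : Perm (Fin k)) :
    ((Fs φ τ σ).filter (goodP φ τ)).card = ((Fs φ τ 1).filter (goodP φ τ)).card := by
  refine Finset.card_bij' (fun ψ _ => ψ * rho φ ψ hτ σ) (fun ψ _ => ψ * (rho φ ψ hτ σ)⁻¹)
    ?_ ?_ ?_ ?_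
  · -- maps into target
    intro ψ hψ
    rw [mem_filter] at hψ ⊢
    obtain ⟨hmem, hg⟩ := hψ
    refine ⟨?_, good_mulrho hτ σ hg⟩
    rw [mem_Fs hτ] at hmem ⊢
    have hcomp : cfun φ (ψ * rho φ ψ hτ σ) τ ∘ (1 : Perm (Fin k)) = cfun φ ψ τ ∘ σ := by
      funext x
      simpa using cfun_mulrho hτ σ hg x
    rw [hcomp]
    exact hmem
  · intro ψ hψ
    rw [mem_filter] at hψ ⊢
    obtain ⟨hmem, hg⟩ := hψ
    refine ⟨?_, good_mulrhoinv hτ σ hg⟩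
    rw [mem_Fs hτ] at hmem ⊢
    have hcomp : cfun φ (ψ * (rho φ ψ hτ σ)⁻¹) τ ∘ σ = cfun φ ψ τ ∘ (1 : Perm (Fin k)) := by
      funext x
      simp only [Function.comp_apply]
      rw [cfun_mulrhoinv hτ σ hg (σ x)]
      simp
    rw [hcomp]
    exact hmem
  · -- left inverse
    intro ψ hψ
    rw [mem_filter] at hψ
    have hg := hψ.2
    have hb : rho φ (ψ * rho φ ψ hτ σ) hτ σ = rho φ ψ hτ σ := by
      show σ.viaEmbedding (bemb φ (ψ * rho φ ψ hτ σ) hτ) = σ.viaEmbedding (bemb φ ψ hτ)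
      rw [bemb_mulrho hτ σ hg]
    show ψ * rho φ ψ hτ σ * (rho φ (ψ * rho φ ψ hτ σ) hτ σ)⁻¹ = ψ
    rw [hb, mul_assoc, mul_inv_cancel, mul_one]
  · intro ψ hψ
    rw [mem_filter] at hψ
    have hg := hψ.2
    have hb : rho φ (ψ * (rho φ ψ hτ σ)⁻¹) hτ σ = rho φ ψ hτ σ := by
      show σ.viaEmbedding (bemb φ (ψ * (rho φ ψ hτ σ)⁻¹) hτ) = σ.viaEmbedding (bemb φ ψ hτ)
      rw [bemb_mulrhoinv hτ σ hg]
    show ψ * (rho φ ψ hτ σ)⁻¹ * rho φ (ψ * (rho φ ψ hτ σ)⁻¹) hτ σ = ψ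
    rw [hb, mul_assoc, inv_mul_cancel, mul_one]



lemma diag_count {m k : ℕ} (φ : Perm (Fin (m+2))) (τ : Fin k → Fin (m+2)) (j : Fin k) :
    (univ.filter fun ψ : Perm (Fin (m+2)) => φ (ψ⁻¹ (τ j)) = ψ⁻¹ (τ j)).card
      = (univ.filter fun t => φ t = t).card * (m+1).factorial := by
  rw [Finset.card_eq_sum_card_fiberwise
    (f := fun ψ : Perm (Fin (m+2)) => ψ⁻¹ (τ j)) (t := univ) (fun ψ _ => mem_univ _)]
  have hx : ∀ x : Fin (m+2),
      (((univ.filter fun ψ : Perm (Fin (m+2)) => φ (ψ⁻¹ (τ j)) = ψ⁻¹ (τ j))).filter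
        fun ψ => ψ⁻¹ (τ j) = x).card = if φ x = x then (m+1).factorial else 0 := by
    intro x
    by_cases hfix : φ x = x
    · rw [if_pos hfix, ← card_one_prescribed (n := m+1) x (τ j)]
      congr 1
      ext ψ
      simp only [mem_filter, mem_univ, true_and]
      constructor
      · rintro ⟨_, h2⟩
        rw [← h2, Perm.apply_inv_self]
      · intro h
        have h2 : ψ⁻¹ (τ j) = x := by rw [Perm.inv_eq_iff_eq, h]
        exact ⟨by rw [h2]; exact hfix, h2⟩
    · rw [if_neg hfix, Finset.card_eq_zero, Finset.eq_empty_iff_forall_notMem]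
      intro ψ hmem
      simp only [mem_filter, mem_univ, true_and] at hmem
      obtain ⟨h1, h2⟩ := hmem
      exact hfix (by rw [← h2]; exact h1)
  rw [Finset.sum_congr rfl (fun x _ => hx x), ← Finset.sum_filter, Finset.sum_const,
    smul_eq_mul]

lemma offdiag_count {m k : ℕ} (φ : Perm (Fin (m+2))) {τ : Fin k → Fin (m+2)}
    (hτ : Function.Injective τ) {i j : Fin k} (hij : i ≠ j) :
    (univ.filter fun ψ : Perm (Fin (m+2)) => φ (ψ⁻¹ (τ j)) = ψ⁻¹ (τ i)).card
      ≤ (m+2) * m.factorial := by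
  have hτij : τ i ≠ τ j := fun h => hij (hτ h)
  rw [Finset.card_eq_sum_card_fiberwise
    (f := fun ψ : Perm (Fin (m+2)) => ψ⁻¹ (τ j)) (t := univ) (fun ψ _ => mem_univ _)]
  have hx : ∀ x : Fin (m+2),
      (((univ.filter fun ψ : Perm (Fin (m+2)) => φ (ψ⁻¹ (τ j)) = ψ⁻¹ (τ i))).filter
        fun ψ => ψ⁻¹ (τ j) = x).card ≤ m.factorial := by
    intro x
    by_cases hfix : φ x = x
    · have : (((univ.filter fun ψ : Perm (Fin (m+2)) => φ (ψ⁻¹ (τ j)) = ψ⁻¹ (τ i))).filter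
          fun ψ => ψ⁻¹ (τ j) = x) = ∅ := by
        rw [Finset.eq_empty_iff_forall_notMem]
        intro ψ hmem
        simp only [mem_filter, mem_univ, true_and] at hmem
        obtain ⟨h1, h2⟩ := hmem
        apply hτij
        have : ψ⁻¹ (τ i) = ψ⁻¹ (τ j) := by rw [h2, ← h1, h2, hfix]
        exact (ψ⁻¹ : Perm (Fin (m+2))).injective this
      rw [this]
      simp [Nat.factorial_pos m |>.le, Nat.one_le_iff_ne_zero]
    · have heq : (((univ.filter fun ψ : Perm (Fin (m+2)) => φ (ψ⁻¹ (τ j)) = ψ⁻¹ (τ i))).filter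
          fun ψ => ψ⁻¹ (τ j) = x)
          = univ.filter fun ψ : Perm (Fin (m+2)) => ψ x = τ j ∧ ψ (φ x) = τ i := by
        ext ψ
        simp only [mem_filter, mem_univ, true_and]
        constructor
        · rintro ⟨h1, h2⟩
          rw [h2] at h1
          constructor
          · rw [← h2, Perm.apply_inv_self]
          · rw [h1, Perm.apply_inv_self]
        · rintro ⟨h1, h2⟩
          have h2' : ψ⁻¹ (τ j) = x := by rw [Perm.inv_eq_iff_eq, h1]
          have h3 : φ x = ψ⁻¹ (τ i) := by rw [eq_comm, Perm.inv_eq_iff_eq, h2]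
          exact ⟨by rw [h2', h3], h2'⟩
      rw [heq, card_two_prescribed (n := m) x (φ x) (τ j) (τ i)
        (fun h => hfix h.symm) hτij.symm]
  calc ∑ x : Fin (m+2), (((univ.filter fun ψ : Perm (Fin (m+2)) =>
          φ (ψ⁻¹ (τ j)) = ψ⁻¹ (τ i))).filter fun ψ => ψ⁻¹ (τ j) = x).card
      ≤ ∑ _x : Fin (m+2), m.factorial := Finset.sum_le_sum (fun x _ => hx x)
    _ = (m+2) * m.factorial := by
        rw [Finset.sum_const, smul_eq_mul, card_univ, Fintype.card_fin]

lemma bad_count {m k : ℕ} (φ : Perm (Fin (m+2))) {τ : Fin k → Fin (m+2)}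
    (hτ : Function.Injective τ) :
    (univ.filter fun ψ : Perm (Fin (m+2)) => ¬ goodP φ τ ψ).card
      ≤ k * ((univ.filter fun t => φ t = t).card * (m+1).factorial)
        + k * (k * ((m+2) * m.factorial)) := by
  have hsub : (univ.filter fun ψ : Perm (Fin (m+2)) => ¬ goodP φ τ ψ)
      ⊆ (univ : Finset (Fin k × Fin k)).biUnion
          (fun p => univ.filter fun ψ : Perm (Fin (m+2)) => φ (ψ⁻¹ (τ p.2)) = ψ⁻¹ (τ p.1)) := by
    intro ψ hmem
    simp only [mem_filter, mem_univ, true_and, goodP, not_forall, not_not] at hmem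
    obtain ⟨i, j, hij⟩ := hmem
    rw [Finset.mem_biUnion]
    exact ⟨(i, j), mem_univ _, by simp only [mem_filter, mem_univ, true_and]; exact hij⟩
  calc (univ.filter fun ψ : Perm (Fin (m+2)) => ¬ goodP φ τ ψ).card
      ≤ _ := Finset.card_le_card hsub
    _ ≤ ∑ p : Fin k × Fin k,
          (univ.filter fun ψ : Perm (Fin (m+2)) => φ (ψ⁻¹ (τ p.2)) = ψ⁻¹ (τ p.1)).card :=
        Finset.card_biUnion_le
    _ = ∑ i : Fin k, ∑ j : Fin k,
          (univ.filter fun ψ : Perm (Fin (m+2)) => φ (ψ⁻¹ (τ j)) = ψ⁻¹ (τ i)).card :=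
        Fintype.sum_prod_type _
    _ ≤ ∑ _i : Fin k, ((univ.filter fun t => φ t = t).card * (m+1).factorial
          + k * ((m+2) * m.factorial)) := by
        apply Finset.sum_le_sum
        intro i _
        calc ∑ j : Fin k, (univ.filter fun ψ : Perm (Fin (m+2)) =>
                φ (ψ⁻¹ (τ j)) = ψ⁻¹ (τ i)).card
            ≤ ∑ j : Fin k, ((if i = j then (univ.filter fun t => φ t = t).card * (m+1).factorial
                else 0) + (m+2) * m.factorial) := by
              apply Finset.sum_le_sum
              intro j _
              by_cases hij : i = j
              · subst hij
                rw [if_pos rfl, diag_count φ τ i]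
                exact Nat.le_add_right _ _
              · rw [if_neg hij, zero_add]
                exact offdiag_count φ hτ hij
          _ = (univ.filter fun t => φ t = t).card * (m+1).factorial
                + k * ((m+2) * m.factorial) := by
              rw [Finset.sum_add_distrib, Finset.sum_ite_eq univ i
                (fun _ => (univ.filter fun t => φ t = t).card * (m+1).factorial)]
              simp [Finset.sum_const, card_univ]
    _ = k * ((univ.filter fun t => φ t = t).card * (m+1).factorial)
          + k * (k * ((m+2) * m.factorial)) := by
        rw [Finset.sum_const, smul_eq_mul, card_univ, Fintype.card_fin, Nat.mul_add]


set_option maxHeartbeats 1000000 in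
lemma key_real {m k : ℕ} (φ : Perm (Fin (m+2))) {τ : Fin k → Fin (m+2)}
    (hτ : Function.Injective τ) :
    |((univ.filter fun ψ : Perm (Fin (m+2)) => StrictMono fun j => ψ (φ (ψ⁻¹ (τ j)))).card : ℝ)
        / (m+2).factorial - 1 / k.factorial|
      ≤ k * ((univ.filter fun t => φ t = t).card : ℝ) / (m+2) + (k * k : ℝ) / (m+1) := by
  -- Notation
  set fixc := (univ.filter fun t => φ t = t).card with hfixc
  set G1 := ((Fs φ τ 1).filter (goodP φ τ)).card with hG1
  set B := (univ.filter fun ψ : Perm (Fin (m+2)) => ¬ goodP φ τ ψ).card with hBdef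
  set b1 := ((Fs φ τ 1).filter fun ψ => ¬ goodP φ τ ψ).card with hb1
  -- the fibers partition everything
  have hN : ∑ σ : Perm (Fin k), (Fs φ τ σ).card = (m+2).factorial := by
    have h := Finset.card_eq_sum_card_fiberwise
      (f := fun ψ : Perm (Fin (m+2)) => Tuple.sort (cfun φ ψ τ)) (s := univ) (t := univ)
      (fun ψ _ => mem_univ _)
    rw [card_univ, Fintype.card_perm, Fintype.card_fin] at h
    rw [h]
    apply Finset.sum_congr rfl
    intro σ _
    congr 1
  have hsplit : ∀ σ : Perm (Fin k), (Fs φ τ σ).card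
      = ((Fs φ τ σ).filter (goodP φ τ)).card
        + ((Fs φ τ σ).filter fun ψ => ¬ goodP φ τ ψ).card :=
    fun σ => (Finset.card_filter_add_card_filter_not (goodP φ τ)).symm
  have hBsum : ∑ σ : Perm (Fin k), ((Fs φ τ σ).filter fun ψ => ¬ goodP φ τ ψ).card = B := by
    have h := Finset.card_eq_sum_card_fiberwise
      (f := fun ψ : Perm (Fin (m+2)) => Tuple.sort (cfun φ ψ τ))
      (s := univ.filter fun ψ => ¬ goodP φ τ ψ) (t := univ) (fun ψ _ => mem_univ _)
    rw [hBdef, h]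
    apply Finset.sum_congr rfl
    intro σ _
    congr 1
    ext ψ
    simp only [Fs, mem_filter, mem_univ, true_and]
    tauto
  have hNat : (m+2).factorial = k.factorial * G1 + B := by
    rw [← hN, Finset.sum_congr rfl (fun σ _ => hsplit σ), Finset.sum_add_distrib,
      Finset.sum_congr rfl (fun σ _ => card_good_fiber φ hτ σ), hBsum,
      Finset.sum_const, smul_eq_mul, card_univ, Fintype.card_perm, Fintype.card_fin]
  have hM0 : (univ.filter fun ψ : Perm (Fin (m+2)) => StrictMono fun j => ψ (φ (ψ⁻¹ (τ j))))
      = Fs φ τ 1 := by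
    ext ψ
    rw [mem_Fs hτ]
    simp only [mem_filter, mem_univ, true_and]
    exact Iff.rfl
  have hMsplit : (univ.filter fun ψ : Perm (Fin (m+2)) =>
      StrictMono fun j => ψ (φ (ψ⁻¹ (τ j)))).card = G1 + b1 := by
    rw [hM0]; exact hsplit 1
  have hb1B : b1 ≤ B := by
    rw [← hBsum]
    exact Finset.single_le_sum
      (f := fun σ : Perm (Fin k) => ((Fs φ τ σ).filter fun ψ => ¬ goodP φ τ ψ).card)
      (fun σ _ => Nat.zero_le _) (mem_univ 1)
  have hBbound : B ≤ k * (fixc * (m+1).factorial) + k * (k * ((m+2) * m.factorial)) :=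
    bad_count φ hτ
  -- now real arithmetic
  have hKpos : (0:ℝ) < (k.factorial : ℝ) := by positivity
  have hNpos : (0:ℝ) < ((m+2).factorial : ℝ) := by positivity
  have hK1 : (1:ℝ) ≤ (k.factorial : ℝ) := by
    exact_mod_cast Nat.one_le_iff_ne_zero.mpr k.factorial_ne_zero
  rw [hMsplit]
  have harith : ((G1 + b1 : ℕ) : ℝ) / (m+2).factorial - 1 / k.factorial
      = ((k.factorial : ℝ) * b1 - B) / (k.factorial * (m+2).factorial) := by
    have hNR : ((m+2).factorial : ℝ) = k.factorial * G1 + B := by exact_mod_cast hNat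
    have hNz : (k.factorial : ℝ) * G1 + B ≠ 0 := by rw [← hNR]; positivity
    push_cast
    rw [hNR]
    rw [div_sub_div _ _ hNz (by positivity), div_eq_div_iff (by positivity) (by positivity)]
    ring
  rw [harith]
  have habs : |((k.factorial : ℝ) * b1 - B)| ≤ (k.factorial : ℝ) * B := by
    rw [abs_sub_le_iff]
    constructor
    · have h1 : (k.factorial : ℝ) * b1 ≤ (k.factorial : ℝ) * B := by
        apply mul_le_mul_of_nonneg_left _ hKpos.le
        exact_mod_cast hb1B
      have h2 : (0:ℝ) ≤ (B:ℝ) := by positivity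
      linarith
    · have h1 : (B:ℝ) ≤ (k.factorial : ℝ) * B := by
        nth_rewrite 1 [← one_mul (B:ℝ)]
        apply mul_le_mul_of_nonneg_right hK1 (by positivity)
      have h2 : (0:ℝ) ≤ (k.factorial : ℝ) * b1 := by positivity
      linarith
  calc |((k.factorial : ℝ) * b1 - B) / (k.factorial * (m+2).factorial)|
      = |((k.factorial : ℝ) * b1 - B)| / (k.factorial * (m+2).factorial) := by
        rw [abs_div, abs_of_pos (show (0:ℝ) < (k.factorial : ℝ) * ((m+2).factorial : ℝ) by positivity)]
    _ ≤ ((k.factorial : ℝ) * B) / (k.factorial * (m+2).factorial) :=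
        (div_le_div_iff_of_pos_right (show (0:ℝ) < (k.factorial : ℝ) * (m+2).factorial by positivity)).mpr
          habs
    _ = (B : ℝ) / (m+2).factorial := by
        rw [mul_div_mul_left _ _ (ne_of_gt hKpos)]
    _ ≤ ((k * (fixc * (m+1).factorial) + k * (k * ((m+2) * m.factorial)) : ℕ) : ℝ)
          / (m+2).factorial := by
        apply (div_le_div_iff_of_pos_right hNpos).mpr
        exact_mod_cast hBbound
    _ = k * (fixc : ℝ) / (m+2) + (k * k : ℝ) / (m+1) := by
        have hf2 : ((m+2).factorial : ℕ) = (m+2) * ((m+1) * m.factorial) := by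
          rw [Nat.factorial_succ, Nat.factorial_succ]
        have hf1 : ((m+1).factorial : ℕ) = (m+1) * m.factorial := Nat.factorial_succ m
        rw [hf2, hf1]
        have hm2 : ((m:ℝ)+2) ≠ 0 := by positivity
        have hm1 : ((m:ℝ)+1) ≠ 0 := by positivity
        have hmf : ((m.factorial : ℝ)) ≠ 0 := by positivity
        push_cast
        field_simp

lemma containsSeq_iff {n k : ℕ} (χ : Perm (Fin n)) (τ : Fin k → Fin n) :
    ContainsSeq χ τ ↔ StrictMono fun j => χ⁻¹ (τ j) := by
  constructor
  · rintro ⟨g, hg, hgτ⟩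
    have : (fun j => χ⁻¹ (τ j)) = g := by
      funext j
      rw [← hgτ j, Perm.inv_apply_self]
    rw [this]
    exact hg
  · intro h
    exact ⟨fun j => χ⁻¹ (τ j), h, fun j => Perm.apply_inv_self χ (τ j)⟩

lemma conj_filter_card {n k : ℕ} (P : Finset (Perm (Fin n)))
    (hconj : ∀ φ ∈ P, ∀ ψ : Perm (Fin n), ψ * φ * ψ⁻¹ ∈ P)
    (τ : Fin k → Fin n) (ψ : Perm (Fin n)) :
    (P.filter fun φ => ContainsSeq φ τ).card
      = (P.filter fun φ => ContainsSeq (ψ * φ * ψ⁻¹) τ).card := by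
  refine Finset.card_bij' (fun φ _ => ψ⁻¹ * φ * ψ) (fun φ _ => ψ * φ * ψ⁻¹) ?_ ?_ ?_ ?_
  · intro φ hφ
    rw [mem_filter] at hφ ⊢
    constructor
    · have := hconj φ hφ.1 ψ⁻¹
      rwa [inv_inv] at this
    · have h : ψ * (ψ⁻¹ * φ * ψ) * ψ⁻¹ = φ := by group
      rw [h]
      exact hφ.2
  · intro φ hφ
    rw [mem_filter] at hφ ⊢
    exact ⟨hconj φ hφ.1 ψ, hφ.2⟩
  · intro φ _
    group
  · intro φ _
    group

lemma double_count {m k : ℕ} (P : Finset (Perm (Fin (m+2))))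
    (hconj : ∀ φ ∈ P, ∀ ψ : Perm (Fin (m+2)), ψ * φ * ψ⁻¹ ∈ P)
    (τ : Fin k → Fin (m+2)) :
    (m+2).factorial * (P.filter fun φ => ContainsSeq φ τ).card
      = ∑ φ ∈ P, (univ.filter fun ψ : Perm (Fin (m+2)) =>
          StrictMono fun j => ψ (φ⁻¹ (ψ⁻¹ (τ j)))).card := by
  have h1 : (m+2).factorial * (P.filter fun φ => ContainsSeq φ τ).card
      = ∑ ψ : Perm (Fin (m+2)), (P.filter fun φ => ContainsSeq (ψ * φ * ψ⁻¹) τ).card :=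
    calc (m+2).factorial * (P.filter fun φ => ContainsSeq φ τ).card
        = ∑ _ψ : Perm (Fin (m+2)), (P.filter fun φ => ContainsSeq φ τ).card := by
          rw [Finset.sum_const, smul_eq_mul, card_univ, Fintype.card_perm, Fintype.card_fin]
      _ = ∑ ψ : Perm (Fin (m+2)), (P.filter fun φ => ContainsSeq (ψ * φ * ψ⁻¹) τ).card :=
          Finset.sum_congr rfl (fun ψ _ => conj_filter_card P hconj τ ψ)
  rw [h1]
  have h2 : ∀ ψ : Perm (Fin (m+2)), (P.filter fun φ => ContainsSeq (ψ * φ * ψ⁻¹) τ).card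
      = ∑ φ ∈ P, if ContainsSeq (ψ * φ * ψ⁻¹) τ then 1 else 0 :=
    fun ψ => Finset.card_filter _ _
  rw [Finset.sum_congr rfl (fun ψ _ => h2 ψ), Finset.sum_comm]
  apply Finset.sum_congr rfl
  intro φ _
  rw [Finset.card_filter]
  apply Finset.sum_congr rfl
  intro ψ _
  congr 1
  rw [containsSeq_iff]
  have : (fun j => (ψ * φ * ψ⁻¹)⁻¹ (τ j)) = fun j => ψ (φ⁻¹ (ψ⁻¹ (τ j))) := by
    funext j
    simp [Perm.mul_apply]
  rw [this]

lemma fix_inv_filter {n : ℕ} (φ : Perm (Fin n)) :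
    (univ.filter fun t => φ⁻¹ t = t) = (univ.filter fun t => φ t = t) := by
  ext t
  simp only [mem_filter, mem_univ, true_and]
  constructor
  · intro h
    exact ((Perm.inv_eq_iff_eq).mp h).symm
  · intro h
    exact (Perm.inv_eq_iff_eq).mpr h.symm

set_option maxHeartbeats 1000000 in
lemma main_bound {m k : ℕ} (P : Finset (Perm (Fin (m+2)))) (hP : P.Nonempty)
    (hconj : ∀ φ ∈ P, ∀ ψ : Perm (Fin (m+2)), ψ * φ * ψ⁻¹ ∈ P)
    {τ : Fin k → Fin (m+2)} (hτ : Function.Injective τ) :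
    |((P.filter fun φ => ContainsSeq φ τ).card : ℝ) / P.card - 1 / k.factorial|
      ≤ k * ((∑ φ ∈ P, ((univ.filter fun t => φ t = t).card : ℝ)) / P.card) / (m+2)
        + (k * k : ℝ) / (m+1) := by
  have hS : (0:ℝ) < P.card := by exact_mod_cast Finset.card_pos.mpr hP
  have hN : (0:ℝ) < ((m+2).factorial : ℝ) := by positivity
  set h := ((P.filter fun φ => ContainsSeq φ τ).card : ℝ) with hh
  set Mc := fun φ : Perm (Fin (m+2)) => ((univ.filter fun ψ : Perm (Fin (m+2)) =>
      StrictMono fun j => ψ (φ⁻¹ (ψ⁻¹ (τ j)))).card : ℝ) with hMc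
  have hsum : ∑ φ ∈ P, Mc φ = ((m+2).factorial : ℝ) * h := by
    rw [hh, hMc]
    beta_reduce
    exact_mod_cast (double_count P hconj τ).symm
  have hkey : ∀ φ ∈ P, |Mc φ / (m+2).factorial - 1 / k.factorial|
      ≤ k * ((univ.filter fun t => φ t = t).card : ℝ) / (m+2) + (k * k : ℝ) / (m+1) := by
    intro φ _
    have := key_real (φ⁻¹) hτ
    rwa [fix_inv_filter φ] at this
  have hsplit : h / P.card - 1 / k.factorial
      = (∑ φ ∈ P, (Mc φ / (m+2).factorial - 1 / k.factorial)) / P.card := by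
    rw [Finset.sum_sub_distrib, ← Finset.sum_div, hsum, Finset.sum_const, nsmul_eq_mul,
      mul_comm ((m+2).factorial : ℝ) h, mul_div_assoc, div_self hN.ne', mul_one, sub_div,
      mul_one_div, div_div]
    congr 1
    rw [mul_comm, ← div_div, div_self hS.ne']
  rw [hsplit, abs_div, abs_of_pos hS, div_le_iff₀ hS]
  calc |∑ φ ∈ P, (Mc φ / (m+2).factorial - 1 / k.factorial)|
      ≤ ∑ φ ∈ P, |Mc φ / (m+2).factorial - 1 / k.factorial| :=
        Finset.abs_sum_le_sum_abs _ _
    _ ≤ ∑ φ ∈ P, (k * ((univ.filter fun t => φ t = t).card : ℝ) / (m+2)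
          + (k * k : ℝ) / (m+1)) := Finset.sum_le_sum hkey
    _ = (k * ((∑ φ ∈ P, ((univ.filter fun t => φ t = t).card : ℝ)) / P.card) / (m+2)
          + (k * k : ℝ) / (m+1)) * P.card := by
        rw [Finset.sum_add_distrib, Finset.sum_const, nsmul_eq_mul, ← Finset.sum_div,
          ← Finset.mul_sum]
        rw [add_mul]
        congr 1
        · rw [div_mul_eq_mul_div, mul_assoc, div_mul_cancel₀ _ hS.ne']
        · ring

lemma natCard_fix {n : ℕ} (φ : Perm (Fin n)) :
    (Nat.card {t : Fin n // φ t = t}) = (univ.filter fun t => φ t = t).card := by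
  rw [Nat.card_eq_fintype_card, Fintype.card_subtype]

lemma natCard_contains {n k : ℕ} (P : Finset (Perm (Fin n))) (τ : Fin k → Fin n) :
    (Nat.card {φ : Perm (Fin n) // φ ∈ P ∧ ContainsSeq φ τ})
      = (P.filter fun φ => ContainsSeq φ τ).card := by
  rw [Nat.card_eq_fintype_card, Fintype.card_subtype]
  congr 1
  ext φ
  simp only [mem_filter, mem_univ, true_and]

end QR

/-- Let `𝒫` be a set of permutations with `𝒫_n = 𝒫 ∩ S_n` nonempty for
infinitely many `n`.  If each `𝒫_n` is a union of conjugacy classes of `S_n` and the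
average number `f_n` of fixed points of the elements of `𝒫_n` is `o(n)` (along the `n`
with `𝒫_n` nonempty), then `𝒫` is quasirandom: for every `k ≥ 1`,
`max_τ |p̃(n,τ) − 1/k!| → 0` along the `n` with `𝒫_n` nonempty, where `τ` ranges over
sequences of `k` distinct elements of `[n]` and `p̃(n,τ) = h(n,τ)/|𝒫_n|` with `h(n,τ)`
the number of members of `𝒫_n` containing `τ` as a subsequence. -/
theorem quasirandom_of_conjClosed_of_avgFix_littleO
    (P : (n : ℕ) → Finset (Equiv.Perm (Fin n)))
    (hinf : {n : ℕ | (P n).Nonempty}.Infinite)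
    (hconj : ∀ n : ℕ, ∀ φ ∈ P n, ∀ ψ : Equiv.Perm (Fin n), ψ * φ * ψ⁻¹ ∈ P n)
    (havg : Tendsto (fun n : ℕ => avgFix (P n) / (n : ℝ))
      (atTop ⊓ Filter.principal {n : ℕ | (P n).Nonempty}) (nhds 0)) :
    ∀ k : ℕ, 1 ≤ k → ∀ ε : ℝ, 0 < ε →
      ∀ᶠ n in atTop ⊓ Filter.principal {n : ℕ | (P n).Nonempty},
        ∀ τ : Fin k → Fin n, Function.Injective τ →
          |(Nat.card {φ : Equiv.Perm (Fin n) // φ ∈ P n ∧ ContainsSeq φ τ} : ℝ) /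
              ((P n).card : ℝ) - 1 / (Nat.factorial k : ℝ)| < ε := by
  classical
  intro k hk ε hε
  have hk0 : (0:ℝ) < k := by exact_mod_cast hk
  have hδ : 0 < ε / (2*k) := by positivity
  have h1 : ∀ᶠ n in atTop ⊓ Filter.principal {n : ℕ | (P n).Nonempty},
      |avgFix (P n)| / n < ε/(2*k) := by
    have := Metric.tendsto_nhds.mp havg _ hδ
    simpa [Real.dist_eq] using this
  have h2 : ∀ᶠ n in atTop ⊓ Filter.principal {n : ℕ | (P n).Nonempty},
      max 2 (⌈2*(k:ℝ)*k/ε⌉₊ + 2) ≤ n :=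
    (eventually_atTop.mpr ⟨_, fun n h => h⟩).filter_mono inf_le_left
  have h3 : ∀ᶠ n in atTop ⊓ Filter.principal {n : ℕ | (P n).Nonempty}, (P n).Nonempty :=
    (eventually_principal.mpr (fun n hn => hn)).filter_mono inf_le_right
  filter_upwards [h1, h2, h3] with n hn1 hn2 hn3
  intro τ hτ
  have h2n : 2 ≤ n := le_trans (le_max_left _ _) hn2
  obtain ⟨m, rfl⟩ : ∃ m, n = m + 2 := ⟨n - 2, by omega⟩
  rw [QR.natCard_contains]
  have hmain := QR.main_bound (P (m+2)) hn3 (fun φ hφ ψ => hconj (m+2) φ hφ ψ) hτ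
  have havgeq : (∑ φ ∈ P (m+2), (((univ.filter fun t => φ t = t).card : ℕ) : ℝ))
      / ((P (m+2)).card : ℝ) = avgFix (P (m+2)) := by
    rw [avgFix]
    congr 1
    apply Finset.sum_congr rfl
    intro φ _
    rw [QR.natCard_fix]
  rw [havgeq] at hmain
  -- bound the two error terms
  have hn1' : |avgFix (P (m+2))| / ((m:ℝ)+2) < ε/(2*k) := by
    have h := hn1
    push_cast at h
    exact h
  have hterm1 : (k:ℝ) * avgFix (P (m+2)) / ((m:ℝ)+2) < ε/2 := by
    rw [mul_div_assoc]
    calc (k:ℝ) * (avgFix (P (m+2)) / ((m:ℝ)+2))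
        ≤ (k:ℝ) * (|avgFix (P (m+2))| / ((m:ℝ)+2)) := by
          apply mul_le_mul_of_nonneg_left _ hk0.le
          gcongr
          exact le_abs_self _
      _ < (k:ℝ) * (ε/(2*k)) := mul_lt_mul_of_pos_left hn1' hk0
      _ = ε/2 := by field_simp
  have hcm : (⌈2*(k:ℝ)*k/ε⌉₊ : ℕ) ≤ m := by
    have := le_trans (le_max_right 2 (⌈2*(k:ℝ)*k/ε⌉₊ + 2)) hn2
    omega
  have hm : (2*(k:ℝ)*k/ε) ≤ m := le_trans (Nat.le_ceil _) (by exact_mod_cast hcm)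
  have hterm2 : ((k:ℝ) * k) / ((m:ℝ)+1) ≤ ε/2 := by
    rw [div_le_div_iff₀ (by positivity) (by norm_num)]
    have h' : 2*(k:ℝ)*k ≤ (m:ℝ) * ε := (div_le_iff₀ hε).mp hm
    nlinarith [hε.le]
  calc |((((P (m+2)).filter fun φ => ContainsSeq φ τ).card : ℝ)) / ((P (m+2)).card : ℝ)
        - 1 / (Nat.factorial k : ℝ)|
      ≤ (k:ℝ) * avgFix (P (m+2)) / ((m:ℝ)+2) + ((k:ℝ) * k) / ((m:ℝ)+1) := hmain
    _ < ε/2 + ε/2 := by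
        apply add_lt_add_of_lt_of_le hterm1 hterm2
    _ = ε := by ring
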